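/- In the polynomial ring 𝔽₂[c₁, c₂, c₃], working modulo 2, the fifth power of the power series 1 + c₁t + c₂t² + c₃t³ (truncated in degree ≤ 6 in t) equals 1 + c₁t + c₂t² + c₃t³ + c₁⁴t⁴ + c₁⁵t⁵ + c₁⁴c₂t⁶. -/

import Mathlib

open PowerSeries MvPolynomial

section aux
variable {R : Type*} [CommRing R]

lemma trunc_X_pow_mul_self (q : PowerSeries R) (n : ℕ) :
    PowerSeries.trunc n ((PowerSeries.X ^ n) * q) = 0 := by
  ext d
  rw [PowerSeries.coeff_trunc]
  split_ifs with h
  · rw [PowerSeries.coeff_X_pow_mul', if_neg (by omega), Polynomial.coeff_zero]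
  · rw [Polynomial.coeff_zero]
end aux

/-- Mod 2, `(1 + c₁t + c₂t² + c₃t³)⁵` truncated in degree ≤ 6 equals
`1 + c₁t + c₂t² + c₃t³ + c₁⁴t⁴ + c₁⁵t⁵ + c₁⁴c₂t⁶`. -/
theorem chern_S5_mod_two :
    letI R := MvPolynomial (Fin 3) (ZMod 2)
    letI c₁ : R := MvPolynomial.X 0
    letI c₂ : R := MvPolynomial.X 1
    letI c₃ : R := MvPolynomial.X 2
    PowerSeries.trunc 7
      ((1 + PowerSeries.C c₁ * PowerSeries.X +
          PowerSeries.C c₂ * PowerSeries.X ^ 2 +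
          PowerSeries.C c₃ * PowerSeries.X ^ 3) ^ 5) =
      Polynomial.C 1 + Polynomial.C c₁ * Polynomial.X +
        Polynomial.C c₂ * Polynomial.X ^ 2 +
        Polynomial.C c₃ * Polynomial.X ^ 3 +
        Polynomial.C (c₁ ^ 4) * Polynomial.X ^ 4 +
        Polynomial.C (c₁ ^ 5) * Polynomial.X ^ 5 +
        Polynomial.C (c₁ ^ 4 * c₂) * Polynomial.X ^ 6 := by
  show _
  set R := MvPolynomial (Fin 3) (ZMod 2) with hR
  set c₁ : R := MvPolynomial.X 0 with hc1
  set c₂ : R := MvPolynomial.X 1 with hc2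
  set c₃ : R := MvPolynomial.X 2 with hc3
  set P : Polynomial R := 1 + Polynomial.C c₁ * Polynomial.X +
      Polynomial.C c₂ * Polynomial.X ^ 2 + Polynomial.C c₃ * Polynomial.X ^ 3 with hPdef
  have hsq : ∀ x y : Polynomial R, (x + y) ^ 2 = x ^ 2 + y ^ 2 := fun x y =>
    add_pow_char x y 2
  have e2 : P ^ 2 = 1 + (Polynomial.C c₁ * Polynomial.X) ^ 2 +
      (Polynomial.C c₂ * Polynomial.X ^ 2) ^ 2 +
      (Polynomial.C c₃ * Polynomial.X ^ 3) ^ 2 := by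
    rw [show P ^ 2 = (((1 + Polynomial.C c₁ * Polynomial.X) +
        Polynomial.C c₂ * Polynomial.X ^ 2) + Polynomial.C c₃ * Polynomial.X ^ 3) ^ 2 by
      rw [hPdef]; try ring
      , hsq, hsq, hsq]
    try ring
  have e4 : P ^ 4 = 1 + (Polynomial.C c₁ * Polynomial.X) ^ 4 +
      (Polynomial.C c₂ * Polynomial.X ^ 2) ^ 4 +
      (Polynomial.C c₃ * Polynomial.X ^ 3) ^ 4 := by
    rw [show P ^ 4 = (P ^ 2) ^ 2 by ring, e2, hsq, hsq, hsq]
    try ring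
  set T : Polynomial R := Polynomial.C 1 + Polynomial.C c₁ * Polynomial.X +
        Polynomial.C c₂ * Polynomial.X ^ 2 +
        Polynomial.C c₃ * Polynomial.X ^ 3 +
        Polynomial.C (c₁ ^ 4) * Polynomial.X ^ 4 +
        Polynomial.C (c₁ ^ 5) * Polynomial.X ^ 5 +
        Polynomial.C (c₁ ^ 4 * c₂) * Polynomial.X ^ 6 with hTdef
  set Q : Polynomial R := Polynomial.C (c₁ ^ 4 * c₃) + Polynomial.C (c₂ ^ 4) * Polynomial.X +
        Polynomial.C (c₁ * c₂ ^ 4) * Polynomial.X ^ 2 +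
        Polynomial.C (c₂ ^ 5) * Polynomial.X ^ 3 +
        Polynomial.C (c₂ ^ 4 * c₃) * Polynomial.X ^ 4 +
        Polynomial.C (c₃ ^ 4) * Polynomial.X ^ 5 +
        Polynomial.C (c₁ * c₃ ^ 4) * Polynomial.X ^ 6 +
        Polynomial.C (c₂ * c₃ ^ 4) * Polynomial.X ^ 7 +
        Polynomial.C (c₃ ^ 5) * Polynomial.X ^ 8 with hQdef
  have key : P ^ 5 = T + Polynomial.X ^ 7 * Q := by
    rw [show P ^ 5 = P ^ 4 * P by ring, e4, hPdef, hTdef, hQdef]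
    simp only [map_pow, map_mul, map_one]
    ring
  have hser : (1 + PowerSeries.C c₁ * PowerSeries.X +
          PowerSeries.C c₂ * PowerSeries.X ^ 2 +
          PowerSeries.C c₃ * PowerSeries.X ^ 3) = (P : PowerSeries R) := by
    rw [hPdef]
    push_cast
    rfl
  rw [hser, ← Polynomial.coe_pow, key]
  push_cast
  rw [map_add, trunc_X_pow_mul_self, add_zero,
    trunc_coe_eq_self (by rw [hTdef]; exact Nat.lt_succ_of_le (by compute_degree!))]
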